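/- arXiv:2407.10178 — 2 statements merged into one kernel-verified Lean document; each statement's English description precedes it below -/
import Mathlib

section
/- Let a > 0 and let φ : [0,a] → ℝ be a concave, continuous, strictly increasing function with φ(0) = 0 and φ(a) = 1 which is not linear (i.e., φ is not of the form φ(t) = t/a). Then every Lebesgue-measurable function f : [0,a] → ℂ with |f(t)| = 1 for almost every t ∈ [0,a] is an extreme point of the closed unit ball of the Lorentz space Λ(φ)[0,a]. -/
open MeasureTheory Set Filter Topology
open scoped ENNReal NNReal Classical

noncomputable section

/-- The distribution function `m {s ∈ [0,a] : τ < ‖f s‖}` of `f` on `[0,a]`. -/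
def distrib {E : Type*} [NormedAddCommGroup E] (a : ℝ) (f : ℝ → E) (τ : ℝ) : ℝ≥0∞ :=
  volume {s ∈ Set.Icc (0:ℝ) a | τ < ‖f s‖}

/-- The decreasing rearrangement `f*` of `f` on `[0,a]`:
`f*(t) = inf {τ ≥ 0 : m {s ∈ [0,a] : ‖f s‖ > τ} ≤ t}`. -/
def rearr {E : Type*} [NormedAddCommGroup E] (a : ℝ) (f : ℝ → E) (t : ℝ) : ℝ :=
  sInf {τ : ℝ | 0 ≤ τ ∧ distrib a f τ ≤ ENNReal.ofReal t}

/-- The clamp of `t : ℝ` to the interval `[0,a]`. -/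
def clampIcc (a t : ℝ) : ℝ := min (max t 0) a

lemma clampIcc_mem (a t : ℝ) (ha : 0 ≤ a) : clampIcc a t ∈ Set.Icc (0:ℝ) a :=
  ⟨le_min (le_max_right t 0) ha, min_le_right _ _⟩

lemma clampIcc_mono (a : ℝ) : Monotone (clampIcc a) := fun _ _ hst =>
  min_le_min (max_le_max hst le_rfl) le_rfl

lemma clampIcc_continuous (a : ℝ) : Continuous (clampIcc a) :=
  (continuous_id.max continuous_const).min continuous_const

/-- The Stieltjes integrator associated with an increasing continuous function `φ` on `[0,a]`
(extended to all of `ℝ` as a constant outside `[0,a]`).  Its Lebesgue–Stieltjes measure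
realizes the integrals `∫₀^a ⋯ dφ(t)`. -/
def stieltjesOfOn (φ : ℝ → ℝ) (a : ℝ) : StieltjesFunction ℝ :=
  if h : 0 ≤ a ∧ MonotoneOn φ (Set.Icc 0 a) ∧ ContinuousOn φ (Set.Icc 0 a) then
    { toFun := fun t => φ (clampIcc a t)
      mono' := fun s t hst =>
        h.2.1 (clampIcc_mem a s h.1) (clampIcc_mem a t h.1) (clampIcc_mono a hst)
      right_continuous' := fun t =>
        ((h.2.2.comp_continuous (clampIcc_continuous a)
          (fun x => clampIcc_mem a x h.1)).continuousAt).continuousWithinAt }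
  else StieltjesFunction.id

/-- The Lorentz space functional `‖f‖_{Λ(φ)} = ∫₀^a f*(t) dφ(t)` (with values in `ℝ≥0∞`). -/
def eLorentzNorm {E : Type*} [NormedAddCommGroup E] (φ : ℝ → ℝ) (a : ℝ) (f : ℝ → E) : ℝ≥0∞ :=
  ∫⁻ t in Set.Ioc (0:ℝ) a, ENNReal.ofReal (rearr a f t) ∂(stieltjesOfOn φ a).measure

/-- Membership in the Lorentz space `Λ(φ)[0,a]`. -/
def MemLorentz {E : Type*} [NormedAddCommGroup E] [MeasurableSpace E]
    (φ : ℝ → ℝ) (a : ℝ) (f : ℝ → E) : Prop :=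
  Measurable f ∧ eLorentzNorm φ a f < ⊤

/-- The Hardy–Lorentz space functional
`‖f‖_{H(Λ(φ))} = sup_{0 ≤ r < 1} ‖t ↦ f (r e^{it})‖_{Λ(φ)}` for functions on the unit disk. -/
def eHLNorm (φ : ℝ → ℝ) (f : ℂ → ℂ) : ℝ≥0∞ :=
  ⨆ r ∈ Set.Ico (0:ℝ) 1,
    eLorentzNorm φ (2 * Real.pi)
      (fun t : ℝ => f (Complex.ofReal r * Complex.exp (Complex.I * Complex.ofReal t)))

/-- The classical `H¹` functional `‖f‖_{H¹} = sup_{0 ≤ r < 1} (1/(2π)) ∫₀^{2π} |f(r e^{it})| dt`. -/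
def eH1Norm (f : ℂ → ℂ) : ℝ≥0∞ :=
  ⨆ r ∈ Set.Ico (0:ℝ) 1,
    (ENNReal.ofReal (2 * Real.pi))⁻¹ *
      ∫⁻ t in Set.Ioc (0:ℝ) (2 * Real.pi),
        ENNReal.ofReal ‖f (Complex.ofReal r * Complex.exp (Complex.I * Complex.ofReal t))‖

/-- `fb` is the boundary (radial limit) function of `f`: for a.e. `t ∈ [0,2π]`,
`f(r e^{it}) → fb t` as `r → 1⁻`.  (For `f ∈ H¹` such a function exists and coincides a.e.
with the nontangential limit `f̃`.) -/
def HasRadialLimits (f : ℂ → ℂ) (fb : ℝ → ℂ) : Prop :=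
  ∀ᵐ t ∂(volume.restrict (Set.Icc (0:ℝ) (2 * Real.pi))),
    Filter.Tendsto (fun r : ℝ => f (Complex.ofReal r * Complex.exp (Complex.I * Complex.ofReal t)))
      (nhdsWithin 1 (Set.Iio 1)) (nhds (fb t))

/-- `f` (with boundary function `fb`) is an outer function:
`f` is non-null and `ln |f 0| = (1/(2π)) ∫₀^{2π} ln |fb s| ds`. -/
def IsOuter (f : ℂ → ℂ) (fb : ℝ → ℂ) : Prop :=
  (∃ z ∈ Metric.ball (0:ℂ) 1, f z ≠ 0) ∧
    Real.log ‖f 0‖ =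
      (1 / (2 * Real.pi)) * ∫ s in Set.Ioc (0:ℝ) (2 * Real.pi), Real.log ‖fb s‖

/-- The set `E₊ = {t ∈ [0,a] : h t > 0}`. -/
def posSet (a : ℝ) (h : ℝ → ℝ) : Set ℝ := {t ∈ Set.Icc (0:ℝ) a | 0 < h t}

/-- The set `E₋ = {t ∈ [0,a] : h t < 0}`. -/
def negSet (a : ℝ) (h : ℝ → ℝ) : Set ℝ := {t ∈ Set.Icc (0:ℝ) a | h t < 0}


section ExtremeLemmas

variable {a : ℝ} {u v : ℝ → ℂ} {φ : ℝ → ℝ} {τ t : ℝ}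

lemma distrib_set_eq (a : ℝ) (u : ℝ → ℂ) (τ : ℝ) :
    {s ∈ Set.Icc (0:ℝ) a | τ < ‖u s‖} = Set.Icc (0:ℝ) a ∩ {s | τ < ‖u s‖} := rfl

lemma distrib_meas_set (hu : Measurable u) (τ : ℝ) :
    MeasurableSet {s ∈ Set.Icc (0:ℝ) a | τ < ‖u s‖} :=
  measurableSet_Icc.inter (measurableSet_lt measurable_const hu.norm)

lemma distrib_anti (a : ℝ) (u : ℝ → ℂ) : Antitone (distrib a u) := by
  intro τ σ h
  exact measure_mono (fun s hs => ⟨hs.1, lt_of_le_of_lt h hs.2⟩)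

lemma distrib_le : distrib a u τ ≤ ENNReal.ofReal a := by
  calc distrib a u τ ≤ volume (Set.Icc (0:ℝ) a) := measure_mono (fun s hs => hs.1)
  _ = ENNReal.ofReal a := by rw [Real.volume_Icc, sub_zero]

lemma distrib_ne_top : distrib a u τ ≠ ⊤ :=
  (distrib_le.trans_lt ENNReal.ofReal_lt_top).ne

lemma distrib_toReal_le (ha : 0 ≤ a) : (distrib a u τ).toReal ≤ a := by
  calc (distrib a u τ).toReal ≤ (ENNReal.ofReal a).toReal :=
        ENNReal.toReal_mono ENNReal.ofReal_ne_top distrib_le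
  _ = a := ENNReal.toReal_ofReal ha

lemma distrib_toReal_nonneg : 0 ≤ (distrib a u τ).toReal := ENNReal.toReal_nonneg

lemma distrib_tendsto (hu : Measurable u) :
    Tendsto (fun n : ℕ => distrib a u n) atTop (𝓝 0) := by
  have h1 : Tendsto (fun n : ℕ => distrib a u n) atTop
      (𝓝 (volume (⋂ n : ℕ, {s ∈ Set.Icc (0:ℝ) a | (n:ℝ) < ‖u s‖}))) := by
    apply tendsto_measure_iInter_atTop (fun n => (distrib_meas_set hu _).nullMeasurableSet)
    · intro m n hmn
      exact fun s hs => ⟨hs.1, lt_of_le_of_lt (Nat.cast_le.2 hmn) hs.2⟩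
    · exact ⟨0, distrib_ne_top⟩
  have h2 : (⋂ n : ℕ, {s ∈ Set.Icc (0:ℝ) a | (n:ℝ) < ‖u s‖}) = ∅ := by
    ext s
    simp only [Set.mem_iInter, Set.mem_empty_iff_false, iff_false, not_forall]
    obtain ⟨n, hn⟩ := exists_nat_gt ‖u s‖
    exact ⟨n, fun hs => absurd hs.2 (not_lt.2 hn.le)⟩
  rwa [h2, measure_empty] at h1

lemma distrib_iSup (τ : ℝ) :
    distrib a u τ = ⨆ n : ℕ, distrib a u (τ + ((n:ℝ)+1)⁻¹) := by
  have : {s ∈ Set.Icc (0:ℝ) a | τ < ‖u s‖} =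
      ⋃ n : ℕ, {s ∈ Set.Icc (0:ℝ) a | τ + ((n:ℝ)+1)⁻¹ < ‖u s‖} := by
    ext s
    simp only [Set.mem_iUnion, Set.mem_setOf_eq, Set.mem_sep_iff]
    constructor
    · rintro ⟨hs, hlt⟩
      obtain ⟨n, hn⟩ := exists_nat_one_div_lt (sub_pos.2 hlt)
      rw [one_div] at hn
      exact ⟨n, hs, by linarith⟩
    · rintro ⟨n, hs, hlt⟩
      have : (0:ℝ) < ((n:ℝ)+1)⁻¹ := by positivity
      exact ⟨hs, by linarith⟩
  rw [distrib, this]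
  apply Directed.measure_iUnion
  intro m n
  rcases le_total m n with h | h
  · exact ⟨n, fun s hs => ⟨hs.1, by
      have hc : (m:ℝ) ≤ (n:ℝ) := Nat.cast_le.2 h
      have : ((n:ℝ)+1)⁻¹ ≤ ((m:ℝ)+1)⁻¹ := by
        apply inv_anti₀ (by positivity); linarith
      linarith [hs.2]⟩, fun s hs => hs⟩
  · exact ⟨m, fun s hs => hs, fun s hs => ⟨hs.1, by
      have hc : (n:ℝ) ≤ (m:ℝ) := Nat.cast_le.2 h
      have : ((m:ℝ)+1)⁻¹ ≤ ((n:ℝ)+1)⁻¹ := by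
        apply inv_anti₀ (by positivity); linarith
      linarith [hs.2]⟩⟩

lemma rearr_bddBelow (t : ℝ) :
    BddBelow {τ : ℝ | 0 ≤ τ ∧ distrib a u τ ≤ ENNReal.ofReal t} :=
  ⟨0, fun τ hτ => hτ.1⟩

lemma rearr_nonneg (a : ℝ) (u : ℝ → ℂ) (t : ℝ) : 0 ≤ rearr a u t :=
  Real.sInf_nonneg (fun τ hτ => hτ.1)

lemma rearr_set_nonempty (hu : Measurable u) (ht : 0 < t) :
    {τ : ℝ | 0 ≤ τ ∧ distrib a u τ ≤ ENNReal.ofReal t}.Nonempty := by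
  have h0 : (0:ℝ≥0∞) < ENNReal.ofReal t := ENNReal.ofReal_pos.2 ht
  obtain ⟨n, hn⟩ := ((distrib_tendsto hu).eventually_lt_const h0).exists
  exact ⟨n, Nat.cast_nonneg n, hn.le⟩

lemma rearr_antitoneOn (hu : Measurable u) : AntitoneOn (rearr a u) (Set.Ioc (0:ℝ) a) := by
  intro s hs t ht hst
  apply csInf_le_csInf (rearr_bddBelow t) (rearr_set_nonempty hu hs.1)
  intro τ hτ
  exact ⟨hτ.1, hτ.2.trans (ENNReal.ofReal_le_ofReal hst)⟩

lemma rearr_le_iff (hu : Measurable u) (ht : 0 < t) (hτ : 0 ≤ τ) :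
    rearr a u t ≤ τ ↔ distrib a u τ ≤ ENNReal.ofReal t := by
  constructor
  · intro h
    rw [distrib_iSup τ]
    apply iSup_le
    intro n
    have hτn : τ < τ + ((n:ℝ)+1)⁻¹ := by
      have : (0:ℝ) < ((n:ℝ)+1)⁻¹ := by positivity
      linarith
    obtain ⟨σ, hσ, hσlt⟩ := exists_lt_of_csInf_lt (rearr_set_nonempty hu ht) (lt_of_le_of_lt h hτn)
    exact (distrib_anti a u hσlt.le).trans hσ.2
  · intro h
    exact csInf_le (rearr_bddBelow t) ⟨hτ, h⟩

lemma lt_rearr_iff (hu : Measurable u) (ht : 0 < t) (hτ : 0 ≤ τ) :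
    τ < rearr a u t ↔ ENNReal.ofReal t < distrib a u τ := by
  rw [← not_le, ← not_le, rearr_le_iff hu ht hτ]

lemma clampIcc_of_mem (ha : 0 ≤ a) {t : ℝ} (ht : t ∈ Set.Icc (0:ℝ) a) : clampIcc a t = t := by
  unfold clampIcc
  rw [max_eq_left ht.1, min_eq_left ht.2]

lemma stieltjesOfOn_coe (ha : 0 ≤ a) (hm : MonotoneOn φ (Set.Icc 0 a))
    (hc : ContinuousOn φ (Set.Icc 0 a)) :
    ⇑(stieltjesOfOn φ a) = fun t => φ (clampIcc a t) := by
  rw [stieltjesOfOn, dif_pos ⟨ha, hm, hc⟩]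

lemma stieltjesOfOn_cont (ha : 0 ≤ a) (hm : MonotoneOn φ (Set.Icc 0 a))
    (hc : ContinuousOn φ (Set.Icc 0 a)) :
    Continuous (stieltjesOfOn φ a) := by
  rw [stieltjesOfOn_coe ha hm hc]
  exact hc.comp_continuous (clampIcc_continuous a) (fun x => clampIcc_mem a x ha)

lemma stieltjesOfOn_measure_Ioo (ha : 0 ≤ a) (hm : MonotoneOn φ (Set.Icc 0 a))
    (hc : ContinuousOn φ (Set.Icc 0 a)) (hφ0 : φ 0 = 0) {c : ℝ} (hcmem : c ∈ Set.Icc (0:ℝ) a) :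
    (stieltjesOfOn φ a).measure (Set.Ioo 0 c) = ENNReal.ofReal (φ c) := by
  rw [StieltjesFunction.measure_Ioo]
  have hl : Function.leftLim (⇑(stieltjesOfOn φ a)) c = (stieltjesOfOn φ a) c := by
    apply leftLim_eq_of_tendsto
    exact ((stieltjesOfOn_cont ha hm hc).tendsto c).mono_left nhdsWithin_le_nhds
  rw [hl, stieltjesOfOn_coe ha hm hc]
  simp only []
  rw [clampIcc_of_mem ha hcmem, clampIcc_of_mem ha ⟨le_refl 0, ha⟩, hφ0, sub_zero]

lemma phi_ge_lin (ha : 0 < a) (hconc : ConcaveOn ℝ (Set.Icc 0 a) φ)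
    (hφ0 : φ 0 = 0) (hφa : φ a = 1) {x : ℝ} (hx : x ∈ Set.Icc (0:ℝ) a) :
    x / a ≤ φ x := by
  have h := hconc.2 (Set.left_mem_Icc.2 ha.le) (Set.right_mem_Icc.2 ha.le)
    (show (0:ℝ) ≤ 1 - x / a by
      have : x / a ≤ 1 := (div_le_one ha).2 hx.2
      linarith)
    (show (0:ℝ) ≤ x / a from div_nonneg hx.1 ha.le)
    (show 1 - x / a + x / a = 1 by ring)
  simp only [smul_eq_mul, mul_zero, zero_add, hφ0, hφa, mul_one, mul_zero] at h
  rw [div_mul_cancel₀ _ ha.ne'] at h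
  linarith

lemma phi_gt_lin (ha : 0 < a) (hconc : ConcaveOn ℝ (Set.Icc 0 a) φ)
    (hφ0 : φ 0 = 0) (hφa : φ a = 1)
    (hnonlin : ¬ ∀ t ∈ Set.Icc (0:ℝ) a, φ t = t / a)
    {x : ℝ} (hx : x ∈ Set.Ioo (0:ℝ) a) : x / a < φ x := by
  push_neg at hnonlin
  obtain ⟨t₀, ht₀mem, ht₀⟩ := hnonlin
  have ht₀gt : t₀ / a < φ t₀ := lt_of_le_of_ne (phi_ge_lin ha hconc hφ0 hφa ht₀mem) (Ne.symm ht₀)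
  have ht₀pos : 0 < t₀ := by
    rcases ht₀mem.1.lt_or_eq with h | h
    · exact h
    · exfalso; rw [← h, hφ0] at ht₀gt; simp at ht₀gt
  have ht₀lt : t₀ < a := by
    rcases ht₀mem.2.lt_or_eq with h | h
    · exact h
    · exfalso; rw [h, hφa] at ht₀gt; rw [div_self ha.ne'] at ht₀gt; simp at ht₀gt
  rcases lt_trichotomy x t₀ with h | h | h
  · have h2 := hconc.2 (Set.left_mem_Icc.2 ha.le) ht₀mem
      (show (0:ℝ) ≤ 1 - x / t₀ by
        have : x / t₀ ≤ 1 := (div_le_one ht₀pos).2 h.le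
        linarith)
      (show (0:ℝ) ≤ x / t₀ from div_nonneg hx.1.le ht₀pos.le)
      (show 1 - x / t₀ + x / t₀ = 1 by ring)
    simp only [smul_eq_mul, mul_zero, zero_add, hφ0] at h2
    rw [div_mul_cancel₀ _ ht₀pos.ne'] at h2
    have : x / t₀ * (t₀ / a) < x / t₀ * φ t₀ := by
      exact mul_lt_mul_of_pos_left ht₀gt (div_pos hx.1 ht₀pos)
    calc x / a = x / t₀ * (t₀ / a) := by field_simp
    _ < x / t₀ * φ t₀ := this
    _ ≤ φ x := h2
  · rw [h]; exact ht₀gt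
  · have hden : (0:ℝ) < a - t₀ := by linarith
    have h2 := hconc.2 ht₀mem (Set.right_mem_Icc.2 ha.le)
      (show (0:ℝ) ≤ (a - x) / (a - t₀) from div_nonneg (by linarith [hx.2]) hden.le)
      (show (0:ℝ) ≤ (x - t₀) / (a - t₀) from div_nonneg (by linarith) hden.le)
      (show (a - x) / (a - t₀) + (x - t₀) / (a - t₀) = 1 by field_simp; ring)
    have hrepr : (a - x) / (a - t₀) * t₀ + (x - t₀) / (a - t₀) * a = x := by field_simp; ring
    simp only [smul_eq_mul, hφa, mul_one, hrepr] at h2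
    have hα : (0:ℝ) < (a - x) / (a - t₀) := div_pos (by linarith [hx.2]) hden
    have : (a - x) / (a - t₀) * (t₀ / a) < (a - x) / (a - t₀) * φ t₀ :=
      mul_lt_mul_of_pos_left ht₀gt hα
    calc x / a = (a - x) / (a - t₀) * (t₀ / a) + (x - t₀) / (a - t₀) := by field_simp; ring
    _ < (a - x) / (a - t₀) * φ t₀ + (x - t₀) / (a - t₀) := by linarith
    _ ≤ φ x := h2

lemma eLorentzNorm_eq (ha : 0 < a) (hm : MonotoneOn φ (Set.Icc 0 a))
    (hc : ContinuousOn φ (Set.Icc 0 a)) (hφ0 : φ 0 = 0) (hu : Measurable u) :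
    eLorentzNorm φ a u
      = ∫⁻ l in Set.Ioi (0:ℝ), ENNReal.ofReal (φ ((distrib a u l).toReal)) := by
  unfold eLorentzNorm
  rw [lintegral_eq_lintegral_meas_lt _ (ae_of_all _ (fun t => rearr_nonneg a u t))
    (aemeasurable_restrict_of_antitoneOn measurableSet_Ioc (rearr_antitoneOn hu))]
  apply setLIntegral_congr_fun measurableSet_Ioi
  intro l hl
  beta_reduce
  rw [Measure.restrict_apply' measurableSet_Ioc]
  have hset : {t : ℝ | l < rearr a u t} ∩ Set.Ioc 0 a
      = Set.Ioo 0 ((distrib a u l).toReal) := by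
    ext t
    simp only [Set.mem_inter_iff, Set.mem_setOf_eq, Set.mem_Ioc, Set.mem_Ioo]
    constructor
    · rintro ⟨hlt, ht0, hta⟩
      refine ⟨ht0, ?_⟩
      rw [lt_rearr_iff hu ht0 (le_of_lt hl)] at hlt
      rw [← ENNReal.ofReal_toReal (distrib_ne_top (a := a) (u := u) (τ := l))] at hlt
      exact (ENNReal.ofReal_lt_ofReal_iff_of_nonneg ht0.le).1 hlt
    · rintro ⟨ht0, htd⟩
      have hta : t ≤ a := le_trans htd.le (distrib_toReal_le ha.le)
      refine ⟨?_, ht0, hta⟩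
      rw [lt_rearr_iff hu ht0 (le_of_lt hl)]
      rw [← ENNReal.ofReal_toReal (distrib_ne_top (a := a) (u := u) (τ := l))]
      exact (ENNReal.ofReal_lt_ofReal_iff_of_nonneg ht0.le).2 htd
  rw [hset]
  exact stieltjesOfOn_measure_Ioo ha.le hm hc hφ0
    ⟨distrib_toReal_nonneg, distrib_toReal_le ha.le⟩

lemma l1_le_lorentz (ha : 0 < a) (hconc : ConcaveOn ℝ (Set.Icc 0 a) φ)
    (hm : MonotoneOn φ (Set.Icc 0 a)) (hc : ContinuousOn φ (Set.Icc 0 a))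
    (hφ0 : φ 0 = 0) (hφa : φ a = 1) (hu : Measurable u) :
    (∫⁻ s in Set.Icc (0:ℝ) a, ENNReal.ofReal ‖u s‖)
      ≤ ENNReal.ofReal a * eLorentzNorm φ a u := by
  have hlc : (∫⁻ s in Set.Icc (0:ℝ) a, ENNReal.ofReal ‖u s‖)
      = ∫⁻ l in Set.Ioi (0:ℝ), distrib a u l := by
    rw [lintegral_eq_lintegral_meas_lt _ (ae_of_all _ (fun s => norm_nonneg _))
      (hu.norm.aemeasurable.restrict)]
    apply setLIntegral_congr_fun measurableSet_Ioi
    intro l _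
    beta_reduce
    rw [Measure.restrict_apply' measurableSet_Icc]
    rw [distrib, Set.inter_comm]
    rfl
  rw [hlc, eLorentzNorm_eq ha hm hc hφ0 hu, ← lintegral_const_mul' _ _ ENNReal.ofReal_ne_top]
  apply setLIntegral_mono' measurableSet_Ioi
  intro l _
  have h1 : (distrib a u l).toReal ≤ a * φ ((distrib a u l).toReal) := by
    have := phi_ge_lin ha hconc hφ0 hφa
      (x := (distrib a u l).toReal) ⟨distrib_toReal_nonneg, distrib_toReal_le ha.le⟩
    calc (distrib a u l).toReal = a * ((distrib a u l).toReal / a) := by field_simp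
    _ ≤ a * φ ((distrib a u l).toReal) := by
        exact mul_le_mul_of_nonneg_left this ha.le
  calc distrib a u l = ENNReal.ofReal ((distrib a u l).toReal) :=
        (ENNReal.ofReal_toReal distrib_ne_top).symm
  _ ≤ ENNReal.ofReal (a * φ ((distrib a u l).toReal)) := ENNReal.ofReal_le_ofReal h1
  _ = ENNReal.ofReal a * ENNReal.ofReal (φ ((distrib a u l).toReal)) :=
      ENNReal.ofReal_mul ha.le

lemma eLorentzNorm_const (ha : 0 < a) (hm : MonotoneOn φ (Set.Icc 0 a))
    (hc : ContinuousOn φ (Set.Icc 0 a)) (hφ0 : φ 0 = 0) (hφa : φ a = 1)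
    (hu : Measurable u) {cv : ℝ} (hcv : 0 ≤ cv)
    (huc : ∀ᵐ s ∂(volume.restrict (Set.Icc (0:ℝ) a)), ‖u s‖ = cv) :
    eLorentzNorm φ a u = ENNReal.ofReal cv := by
  have hd1 : ∀ l : ℝ, l < cv → 0 ≤ l → distrib a u l = ENNReal.ofReal a := by
    intro l hl hl0
    have hce : {s ∈ Set.Icc (0:ℝ) a | l < ‖u s‖} =ᵐ[volume] Set.Icc (0:ℝ) a := by
      have h2 := (ae_restrict_iff' measurableSet_Icc).1 huc
      filter_upwards [h2] with s hs
      simp only [eq_iff_iff, Set.mem_setOf_eq, Set.mem_Icc]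
      constructor
      · rintro ⟨hs1, _⟩; exact hs1
      · intro hs1
        exact ⟨hs1, by rw [hs hs1]; exact hl⟩
    rw [distrib, measure_congr hce, Real.volume_Icc, sub_zero]
  have hd2 : ∀ l : ℝ, cv ≤ l → distrib a u l = 0 := by
    intro l hl
    have hce : {s ∈ Set.Icc (0:ℝ) a | l < ‖u s‖} =ᵐ[volume] (∅ : Set ℝ) := by
      have h2 := (ae_restrict_iff' measurableSet_Icc).1 huc
      filter_upwards [h2] with s hs
      show (s ∈ Set.Icc (0:ℝ) a ∧ l < ‖u s‖) = False
      refine eq_false ?_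
      rintro ⟨hs1, hlt⟩
      rw [hs hs1] at hlt
      exact absurd hlt (not_lt.2 hl)
    rw [distrib, measure_congr hce, measure_empty]
  rw [eLorentzNorm_eq ha hm hc hφ0 hu]
  have hint : ∀ l ∈ Set.Ioi (0:ℝ),
      ENNReal.ofReal (φ ((distrib a u l).toReal))
        = (Set.Ioo (0:ℝ) cv).indicator (fun _ => 1) l := by
    intro l hl
    rcases lt_or_ge l cv with h | h
    · rw [hd1 l h (le_of_lt hl), ENNReal.toReal_ofReal ha.le, hφa,
        Set.indicator_of_mem (Set.mem_Ioo.2 ⟨hl, h⟩)]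
      exact ENNReal.ofReal_one
    · rw [hd2 l h, Set.indicator_of_notMem (by simp [Set.mem_Ioo, not_lt.2 h])]
      simp [hφ0]
  rw [setLIntegral_congr_fun measurableSet_Ioi hint]
  rw [lintegral_indicator measurableSet_Ioo, Measure.restrict_restrict measurableSet_Ioo]
  rw [lintegral_one]
  have : Set.Ioo (0:ℝ) cv ∩ Set.Ioi 0 = Set.Ioo 0 cv := by
    apply Set.inter_eq_self_of_subset_left
    exact fun x hx => hx.1
  rw [Measure.restrict_apply_univ, this, Real.volume_Ioo, sub_zero]

lemma distrib_ge_ae (hu : Measurable u) :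
    ∀ᵐ l ∂(volume : Measure ℝ),
      volume {s ∈ Set.Icc (0:ℝ) a | l ≤ ‖u s‖} = distrib a u l := by
  have hcnt : Set.Countable {l : ℝ |
      0 < (volume.restrict (Set.Icc (0:ℝ) a)) {s | ‖u s‖ = l}} := by
    apply Measure.countable_meas_level_set_pos (g := fun s => ‖u s‖) hu.norm
  have hnull : (volume : Measure ℝ) {l : ℝ |
      0 < (volume.restrict (Set.Icc (0:ℝ) a)) {s | ‖u s‖ = l}} = 0 :=
    hcnt.measure_zero _
  rw [ae_iff]
  apply measure_mono_null _ hnull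
  intro l hl
  simp only [Set.mem_setOf_eq] at hl ⊢
  by_contra hpos
  apply hl
  push_neg at hpos
  rw [nonpos_iff_eq_zero] at hpos
  have hsplit : {s ∈ Set.Icc (0:ℝ) a | l ≤ ‖u s‖}
      = {s ∈ Set.Icc (0:ℝ) a | l < ‖u s‖} ∪ (Set.Icc (0:ℝ) a ∩ {s | ‖u s‖ = l}) := by
    ext s
    simp only [Set.mem_setOf_eq, Set.mem_union, Set.mem_inter_iff]
    constructor
    · rintro ⟨hs, hle⟩
      rcases hle.lt_or_eq with h | h
      · exact Or.inl ⟨hs, h⟩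
      · exact Or.inr ⟨hs, h.symm⟩
    · rintro (⟨hs, hlt⟩ | ⟨hs, heq⟩)
      · exact ⟨hs, hlt.le⟩
      · exact ⟨hs, heq.ge⟩
  have hlev : volume (Set.Icc (0:ℝ) a ∩ {s | ‖u s‖ = l}) = 0 := by
    have hms : MeasurableSet {s : ℝ | ‖u s‖ = l} := hu.norm (measurableSet_singleton l)
    rw [Measure.restrict_apply hms] at hpos
    rw [Set.inter_comm]
    exact hpos
  apply le_antisymm
  · rw [hsplit]
    calc volume _ ≤ volume {s ∈ Set.Icc (0:ℝ) a | l < ‖u s‖}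
        + volume (Set.Icc (0:ℝ) a ∩ {s | ‖u s‖ = l}) := measure_union_le _ _
    _ = distrib a u l := by rw [hlev, add_zero]; rfl
  · exact measure_mono (fun s hs => ⟨hs.1, hs.2.le⟩)

lemma ae_eq_of_lintegral_le {α : Type*} [MeasurableSpace α] {μ : Measure α}
    {h1 h2 : α → ℝ≥0∞} (hm1 : AEMeasurable h1 μ) (hm2 : AEMeasurable h2 μ)
    (hle : ∀ᵐ x ∂μ, h2 x ≤ h1 x) (hfin : ∫⁻ x, h2 x ∂μ ≠ ⊤)
    (hint : ∫⁻ x, h1 x ∂μ ≤ ∫⁻ x, h2 x ∂μ) :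
    ∀ᵐ x ∂μ, h1 x = h2 x := by
  have hsub : ∫⁻ x, (h1 x - h2 x) ∂μ = ∫⁻ x, h1 x ∂μ - ∫⁻ x, h2 x ∂μ :=
    lintegral_sub' hm2 hfin hle
  have hz : ∫⁻ x, (h1 x - h2 x) ∂μ = 0 := by
    rw [hsub]
    exact tsub_eq_zero_iff_le.2 hint
  have := (lintegral_eq_zero_iff' (hm1.sub hm2)).1 hz
  filter_upwards [this, hle] with x hx hx2
  have : h1 x ≤ h2 x := tsub_eq_zero_iff_le.1 hx
  exact le_antisymm this hx2

lemma eq_norm_smul_of_triangle_eq {c z : ℂ} (hc : ‖c‖ = 1)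
    (h : ‖z‖ + ‖2 • c - z‖ = 2) : z = (‖z‖ : ℂ) * c := by
  set w : ℂ := z * (starRingEnd ℂ) c with hw
  have hcc : (starRingEnd ℂ) c * c = 1 := by
    rw [mul_comm, Complex.mul_conj]
    rw [Complex.normSq_eq_norm_sq, hc]
    norm_num
  have hzw : z = w * c := by
    rw [hw, mul_assoc, hcc, mul_one]
  have habs_w : ‖w‖ = ‖z‖ := by
    rw [hw, norm_mul]
    have : ‖(starRingEnd ℂ) c‖ = 1 := by rw [RCLike.norm_conj, hc]
    rw [this, mul_one]
  have h2w : ‖(2:ℂ) - w‖ = ‖2 • c - z‖ := by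
    have : ((2:ℂ) - w) * c = 2 • c - z := by
      rw [sub_mul, hw, mul_assoc, hcc, mul_one]
      simp [two_smul]; ring
    calc ‖(2:ℂ) - w‖ = ‖(2 - w) * c‖ := by rw [norm_mul, hc, mul_one]
    _ = ‖2 • c - z‖ := by rw [this]
  have hsum : ‖w‖ + ‖(2:ℂ) - w‖ = 2 := by rw [habs_w, h2w]; exact h
  have hre1 : w.re ≤ ‖w‖ := Complex.re_le_norm w
  have hre2 : ((2:ℂ) - w).re ≤ ‖(2:ℂ) - w‖ := Complex.re_le_norm _
  have hre2' : (2:ℝ) - w.re ≤ ‖(2:ℂ) - w‖ := by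
    simpa using hre2
  have hwre : ‖w‖ = w.re := by linarith
  have him : w.im = 0 := by
    have h1 : ‖w‖^2 = w.re^2 + w.im^2 := by
      rw [Complex.sq_norm, Complex.normSq_apply]; ring
    rw [hwre] at h1
    nlinarith
  have hwr : w = (w.re : ℂ) := Complex.ext rfl (by simp [him])
  rw [habs_w] at hwre
  have hnorm : ‖((‖z‖ : ℂ)) * c‖ = ‖z‖ := by
    rw [norm_mul, hc, mul_one, Complex.norm_real, Real.norm_eq_abs,
      abs_of_nonneg (norm_nonneg z)]
  rw [hzw, hwr, ← hwre, hnorm]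

lemma reflect_lintegral (h : ℝ → ℝ≥0∞) :
    ∫⁻ x in Set.Ioo (0:ℝ) 2, h (2 - x) = ∫⁻ x in Set.Ioo (0:ℝ) 2, h x := by
  have hmp : MeasurePreserving (fun x : ℝ => 2 - x) volume volume :=
    Measure.measurePreserving_sub_left volume 2
  have hemb : MeasurableEmbedding (fun x : ℝ => 2 - x) :=
    (Homeomorph.subLeft (2:ℝ)).measurableEmbedding
  have hpre : (fun x : ℝ => 2 - x) ⁻¹' (Set.Ioo (0:ℝ) 2) = Set.Ioo (0:ℝ) 2 := by
    ext x
    simp only [Set.mem_preimage, Set.mem_Ioo]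
    constructor <;> rintro ⟨h1, h2⟩ <;> constructor <;> linarith
  calc ∫⁻ x in Set.Ioo (0:ℝ) 2, h (2 - x)
      = ∫⁻ x in (fun x : ℝ => 2 - x) ⁻¹' (Set.Ioo (0:ℝ) 2), h (2 - x) := by rw [hpre]
  _ = ∫⁻ x in Set.Ioo (0:ℝ) 2, h x := hmp.setLIntegral_comp_preimage_emb hemb h _

lemma distrib_zero_of_ae (hl : ∀ᵐ s ∂(volume.restrict (Set.Icc (0:ℝ) a)), ¬ (τ < ‖u s‖)) :
    distrib a u τ = 0 := by
  have hce : {s ∈ Set.Icc (0:ℝ) a | τ < ‖u s‖} =ᵐ[volume] (∅ : Set ℝ) := by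
    have h2 := (ae_restrict_iff' measurableSet_Icc).1 hl
    filter_upwards [h2] with s hs
    show (s ∈ Set.Icc (0:ℝ) a ∧ τ < ‖u s‖) = False
    refine eq_false ?_
    rintro ⟨hs1, hlt⟩
    exact hs hs1 hlt
  rw [distrib, measure_congr hce, measure_empty]

lemma distrib_reflect (hu : Measurable u)
    (hvn : ∀ᵐ s ∂(volume.restrict (Set.Icc (0:ℝ) a)), ‖v s‖ = 2 - ‖u s‖) :
    ∀ᵐ l ∂(volume : Measure ℝ),
      distrib a v (2 - l) = ENNReal.ofReal a - distrib a u l := by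
  filter_upwards [distrib_ge_ae (a := a) hu] with l hl
  have hv1 : {s ∈ Set.Icc (0:ℝ) a | 2 - l < ‖v s‖}
      =ᵐ[volume] {s ∈ Set.Icc (0:ℝ) a | ‖u s‖ < l} := by
    have h2 := (ae_restrict_iff' measurableSet_Icc).1 hvn
    filter_upwards [h2] with s hs
    simp only [eq_iff_iff, Set.mem_setOf_eq]
    constructor
    · rintro ⟨hs1, hlt⟩
      rw [hs hs1] at hlt
      exact ⟨hs1, by linarith⟩
    · rintro ⟨hs1, hlt⟩
      exact ⟨hs1, by rw [hs hs1]; linarith⟩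
  rw [distrib, measure_congr hv1]
  have hdiff : {s ∈ Set.Icc (0:ℝ) a | ‖u s‖ < l}
      = Set.Icc (0:ℝ) a \ {s ∈ Set.Icc (0:ℝ) a | l ≤ ‖u s‖} := by
    ext s
    simp only [Set.mem_setOf_eq, Set.mem_diff, not_and, not_le]
    constructor
    · rintro ⟨hs1, hlt⟩
      exact ⟨hs1, fun _ => hlt⟩
    · rintro ⟨hs1, hlt⟩
      exact ⟨hs1, hlt hs1⟩
  have hms : NullMeasurableSet {s : ℝ | s ∈ Set.Icc (0:ℝ) a ∧ l ≤ ‖u s‖} volume :=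
    (measurableSet_Icc.inter (measurableSet_le measurable_const hu.norm)).nullMeasurableSet
  rw [hdiff, measure_diff (fun s hs => hs.1) hms (by rw [hl]; exact distrib_ne_top), hl,
    Real.volume_Icc, sub_zero]

lemma cut_lintegral {G : ℝ → ℝ≥0∞} (hG : ∀ l : ℝ, 2 ≤ l → G l = 0) :
    ∫⁻ l in Set.Ioi (0:ℝ), G l = ∫⁻ l in Set.Ioo (0:ℝ) 2, G l := by
  have hun : Set.Ioi (0:ℝ) = Set.Ioo (0:ℝ) 2 ∪ Set.Ici 2 := by
    ext x
    simp only [Set.mem_Ioi, Set.mem_union, Set.mem_Ioo, Set.mem_Ici]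
    constructor
    · intro hx
      rcases lt_or_ge x 2 with h | h
      · exact Or.inl ⟨hx, h⟩
      · exact Or.inr h
    · rintro (⟨h1, _⟩ | h)
      · exact h1
      · linarith
  have hdisj : Disjoint (Set.Ioo (0:ℝ) 2) (Set.Ici 2) := by
    rw [Set.disjoint_left]
    rintro x ⟨_, h2⟩ h3
    exact absurd h3 (not_le.2 h2)
  rw [hun, lintegral_union measurableSet_Ici hdisj]
  have : ∫⁻ l in Set.Ici (2:ℝ), G l = 0 := by
    rw [setLIntegral_congr_fun measurableSet_Ici
      (fun l (hl : l ∈ Set.Ici (2:ℝ)) => hG l hl)]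
    exact lintegral_zero
  rw [this, add_zero]

lemma distrib_D_antitone (a : ℝ) (u : ℝ → ℂ) :
    Antitone (fun l => (distrib a u l).toReal) := by
  intro s t hst
  exact ENNReal.toReal_mono distrib_ne_top (distrib_anti a u hst)

lemma G_measurable (ha : 0 ≤ a) (hm : MonotoneOn φ (Set.Icc 0 a))
    (hc : ContinuousOn φ (Set.Icc 0 a)) {D : ℝ → ℝ} (hD : Measurable D)
    (hDmem : ∀ l, D l ∈ Set.Icc (0:ℝ) a) :
    Measurable (fun l => ENNReal.ofReal (φ (D l))) := by
  have : (fun l => φ (D l)) = (fun l => (stieltjesOfOn φ a) (D l)) := by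
    funext l
    rw [stieltjesOfOn_coe ha hm hc]
    simp only []
    rw [clampIcc_of_mem ha (hDmem l)]
  apply Measurable.ennreal_ofReal
  rw [this]
  exact ((stieltjesOfOn_cont ha hm hc).measurable).comp hD

end ExtremeLemmas

/-- If `φ` is a nonlinear, strictly increasing, concave, continuous
function on `[0,a]` with `φ 0 = 0`, `φ a = 1`, then every measurable `f : [0,a] → ℂ`
with `|f| = 1` a.e. is an extreme point of the unit ball of `Λ(φ)[0,a]`. -/
theorem extreme_of_unimodular (a : ℝ) (ha : 0 < a) (φ : ℝ → ℝ)
    (hconc : ConcaveOn ℝ (Set.Icc 0 a) φ)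
    (hcont : ContinuousOn φ (Set.Icc 0 a))
    (hmono : StrictMonoOn φ (Set.Icc 0 a))
    (hφ0 : φ 0 = 0) (hφa : φ a = 1)
    (hnonlin : ¬ ∀ t ∈ Set.Icc (0:ℝ) a, φ t = t / a)
    (f : ℝ → ℂ) (hf : Measurable f)
    (hf1 : ∀ᵐ t ∂(volume.restrict (Set.Icc (0:ℝ) a)), ‖f t‖ = 1) :
    eLorentzNorm φ a f = 1 ∧
      ∀ g : ℝ → ℂ, Measurable g →
        eLorentzNorm φ a (f + g) ≤ 1 → eLorentzNorm φ a (f - g) ≤ 1 →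
        g =ᵐ[volume.restrict (Set.Icc (0:ℝ) a)] 0 := by
  have hm : MonotoneOn φ (Set.Icc 0 a) := hmono.monotoneOn
  have hnorm1 : eLorentzNorm φ a f = 1 := by
    rw [eLorentzNorm_const ha hm hcont hφ0 hφa hf zero_le_one hf1]
    exact ENNReal.ofReal_one
  refine ⟨hnorm1, ?_⟩
  intro g hg hfg hfg'
  set u : ℝ → ℂ := f + g with hu_def
  set v : ℝ → ℂ := f - g with hv_def
  have hu : Measurable u := hf.add hg
  have hv : Measurable v := hf.sub hg
  have huv : ∀ s, u s + v s = 2 • f s := by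
    intro s
    simp only [hu_def, hv_def, Pi.add_apply, Pi.sub_apply, two_smul]
    ring
  -- Step A : pointwise a.e. triangle equality
  have htri : ∀ᵐ s ∂(volume.restrict (Set.Icc (0:ℝ) a)),
      (2:ℝ≥0∞) ≤ ENNReal.ofReal ‖u s‖ + ENNReal.ofReal ‖v s‖ := by
    filter_upwards [hf1] with s hs
    rw [← ENNReal.ofReal_add (norm_nonneg _) (norm_nonneg _)]
    have h2 : (2:ℝ) ≤ ‖u s‖ + ‖v s‖ := by
      have hn : ‖u s + v s‖ = 2 := by
        rw [huv s, two_smul, ← two_mul, norm_mul, hs, mul_one]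
        simp
      calc (2:ℝ) = ‖u s + v s‖ := hn.symm
      _ ≤ ‖u s‖ + ‖v s‖ := norm_add_le _ _
    calc (2:ℝ≥0∞) = ENNReal.ofReal 2 := by norm_num
    _ ≤ ENNReal.ofReal (‖u s‖ + ‖v s‖) := ENNReal.ofReal_le_ofReal h2
  have hIle : ∫⁻ s in Set.Icc (0:ℝ) a,
      (ENNReal.ofReal ‖u s‖ + ENNReal.ofReal ‖v s‖) ∂volume
      ≤ 2 * ENNReal.ofReal a := by
    rw [lintegral_add_left (hu.norm.ennreal_ofReal)]
    calc (∫⁻ s in Set.Icc (0:ℝ) a, ENNReal.ofReal ‖u s‖ ∂volume)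
        + ∫⁻ s in Set.Icc (0:ℝ) a, ENNReal.ofReal ‖v s‖ ∂volume
        ≤ ENNReal.ofReal a * eLorentzNorm φ a u + ENNReal.ofReal a * eLorentzNorm φ a v :=
          add_le_add (l1_le_lorentz ha hconc hm hcont hφ0 hφa hu)
            (l1_le_lorentz ha hconc hm hcont hφ0 hφa hv)
    _ ≤ ENNReal.ofReal a * 1 + ENNReal.ofReal a * 1 :=
          add_le_add (mul_le_mul_right hfg _) (mul_le_mul_right hfg' _)
    _ = 2 * ENNReal.ofReal a := by ring
  have hconst2 : (∫⁻ _ in Set.Icc (0:ℝ) a, (2:ℝ≥0∞) ∂volume) = 2 * ENNReal.ofReal a := by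
    rw [lintegral_const, Measure.restrict_apply_univ, Real.volume_Icc, sub_zero]
  have hsum : ∀ᵐ s ∂(volume.restrict (Set.Icc (0:ℝ) a)), ‖u s‖ + ‖v s‖ = 2 := by
    have hh := ae_eq_of_lintegral_le
      (h1 := fun s => ENNReal.ofReal ‖u s‖ + ENNReal.ofReal ‖v s‖)
      (h2 := fun _ => (2:ℝ≥0∞))
      ((hu.norm.ennreal_ofReal.add hv.norm.ennreal_ofReal).aemeasurable)
      aemeasurable_const htri
      (by rw [hconst2]; exact ENNReal.mul_ne_top (by norm_num) ENNReal.ofReal_ne_top)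
      (by rw [hconst2]; exact hIle)
    filter_upwards [hh] with s hs
    rw [← ENNReal.ofReal_add (norm_nonneg _) (norm_nonneg _)] at hs
    have h2 : ENNReal.ofReal (‖u s‖ + ‖v s‖) = ENNReal.ofReal 2 := by
      rw [hs]; norm_num
    exact (ENNReal.ofReal_eq_ofReal_iff (by positivity) (by norm_num)).1 h2
  have hpar : ∀ᵐ s ∂(volume.restrict (Set.Icc (0:ℝ) a)), u s = (‖u s‖ : ℂ) * f s := by
    filter_upwards [hf1, hsum] with s hs1 hs2
    apply eq_norm_smul_of_triangle_eq hs1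
    have hvv : 2 • f s - u s = v s := by
      rw [← huv s]; ring
    rw [hvv]
    exact hs2
  have hvnorm : ∀ᵐ s ∂(volume.restrict (Set.Icc (0:ℝ) a)), ‖v s‖ = 2 - ‖u s‖ := by
    filter_upwards [hsum] with s hs; linarith
  have hule : ∀ᵐ s ∂(volume.restrict (Set.Icc (0:ℝ) a)), ‖u s‖ ≤ 2 := by
    filter_upwards [hsum] with s hs
    have := norm_nonneg (v s); linarith
  have hvle : ∀ᵐ s ∂(volume.restrict (Set.Icc (0:ℝ) a)), ‖v s‖ ≤ 2 := by
    filter_upwards [hsum] with s hs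
    have := norm_nonneg (u s); linarith
  have hu2 : ∀ l : ℝ, 2 ≤ l → distrib a u l = 0 := by
    intro l hl
    apply distrib_zero_of_ae
    filter_upwards [hule] with s hs
    intro hlt; linarith
  have hv2 : ∀ l : ℝ, 2 ≤ l → distrib a v l = 0 := by
    intro l hl
    apply distrib_zero_of_ae
    filter_upwards [hvle] with s hs
    intro hlt; linarith
  -- Step B : master formula + reflection
  have hU := eLorentzNorm_eq ha hm hcont hφ0 hu
  have hV := eLorentzNorm_eq ha hm hcont hφ0 hv
  have hGu0 : ∀ l : ℝ, 2 ≤ l → ENNReal.ofReal (φ ((distrib a u l).toReal)) = 0 := by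
    intro l hl; rw [hu2 l hl]; simp [hφ0]
  have hGv0 : ∀ l : ℝ, 2 ≤ l → ENNReal.ofReal (φ ((distrib a v l).toReal)) = 0 := by
    intro l hl; rw [hv2 l hl]; simp [hφ0]
  rw [cut_lintegral hGu0] at hU
  rw [cut_lintegral hGv0] at hV
  rw [(reflect_lintegral (fun l => ENNReal.ofReal (φ ((distrib a v l).toReal)))).symm] at hV
  have hkey : ∀ᵐ l ∂(volume : Measure ℝ),
      ENNReal.ofReal (φ ((distrib a v (2 - l)).toReal))
        = ENNReal.ofReal (φ (a - (distrib a u l).toReal)) := by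
    filter_upwards [distrib_reflect (a := a) hu hvnorm] with l hl
    rw [hl, ENNReal.toReal_sub_of_le distrib_le ENNReal.ofReal_ne_top,
      ENNReal.toReal_ofReal ha.le]
  rw [lintegral_congr_ae (ae_restrict_of_ae hkey)] at hV
  have hmemD : ∀ l : ℝ, (distrib a u l).toReal ∈ Set.Icc (0:ℝ) a :=
    fun l => ⟨distrib_toReal_nonneg, distrib_toReal_le ha.le⟩
  have hGumeas : Measurable (fun l => ENNReal.ofReal (φ ((distrib a u l).toReal))) :=
    G_measurable ha.le hm hcont (distrib_D_antitone a u).measurable hmemD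
  have hGameas : Measurable (fun l => ENNReal.ofReal (φ (a - (distrib a u l).toReal))) := by
    apply G_measurable ha.le hm hcont
      (measurable_const.sub (distrib_D_antitone a u).measurable)
    intro l
    show a - (distrib a u l).toReal ∈ Set.Icc (0:ℝ) a
    exact ⟨by linarith [(hmemD l).2], by linarith [(hmemD l).1]⟩
  have hUVsum : ∫⁻ l in Set.Ioo (0:ℝ) 2,
      (ENNReal.ofReal (φ ((distrib a u l).toReal))
        + ENNReal.ofReal (φ (a - (distrib a u l).toReal))) ∂volume ≤ 2 := by
    rw [lintegral_add_left hGumeas, ← hU, ← hV]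
    calc eLorentzNorm φ a u + eLorentzNorm φ a v ≤ 1 + 1 := add_le_add hfg hfg'
    _ = 2 := by norm_num
  have hone : (∫⁻ _ in Set.Ioo (0:ℝ) 2, (1:ℝ≥0∞) ∂volume) = 2 := by
    rw [lintegral_one, Measure.restrict_apply_univ, Real.volume_Ioo, sub_zero]
    norm_num
  have h1le : ∀ l : ℝ, (1:ℝ≥0∞) ≤ ENNReal.ofReal (φ ((distrib a u l).toReal))
      + ENNReal.ofReal (φ (a - (distrib a u l).toReal)) := by
    intro l
    have hxmem := hmemD l
    set x := (distrib a u l).toReal with hx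
    have hx1 : x / a ≤ φ x := phi_ge_lin ha hconc hφ0 hφa hxmem
    have hamem : a - x ∈ Set.Icc (0:ℝ) a := ⟨by linarith [hxmem.2], by linarith [hxmem.1]⟩
    have hx2 : (a - x) / a ≤ φ (a - x) := phi_ge_lin ha hconc hφ0 hφa hamem
    have hφx0 : 0 ≤ φ x := le_trans (div_nonneg hxmem.1 ha.le) hx1
    have hφa0 : 0 ≤ φ (a - x) := le_trans (div_nonneg hamem.1 ha.le) hx2
    rw [← ENNReal.ofReal_add hφx0 hφa0, ← ENNReal.ofReal_one]
    apply ENNReal.ofReal_le_ofReal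
    have hxa : x / a + (a - x) / a = 1 := by field_simp; ring
    linarith
  have hDeq : ∀ᵐ l ∂(volume.restrict (Set.Ioo (0:ℝ) 2)),
      distrib a u l = 0 ∨ distrib a u l = ENNReal.ofReal a := by
    have heq := ae_eq_of_lintegral_le
      (h1 := fun l => ENNReal.ofReal (φ ((distrib a u l).toReal))
        + ENNReal.ofReal (φ (a - (distrib a u l).toReal)))
      (h2 := fun _ => (1:ℝ≥0∞))
      ((hGumeas.add hGameas).aemeasurable) aemeasurable_const (ae_of_all _ h1le)
      (by rw [hone]; norm_num)
      (by rw [hone]; exact hUVsum)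
    filter_upwards [heq] with l hl
    have hxmem := hmemD l
    set x := (distrib a u l).toReal with hx
    have hx1 : x / a ≤ φ x := phi_ge_lin ha hconc hφ0 hφa hxmem
    have hamem : a - x ∈ Set.Icc (0:ℝ) a := ⟨by linarith [hxmem.2], by linarith [hxmem.1]⟩
    have hx2 : (a - x) / a ≤ φ (a - x) := phi_ge_lin ha hconc hφ0 hφa hamem
    have hφx0 : 0 ≤ φ x := le_trans (div_nonneg hxmem.1 ha.le) hx1
    have hφa0 : 0 ≤ φ (a - x) := le_trans (div_nonneg hamem.1 ha.le) hx2
    rw [← ENNReal.ofReal_add hφx0 hφa0, ← ENNReal.ofReal_one] at hl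
    have hsum1 : φ x + φ (a - x) = 1 :=
      (ENNReal.ofReal_eq_ofReal_iff (by linarith) (by norm_num)).1 hl
    have hx0a : x = 0 ∨ x = a := by
      by_contra hcon
      push_neg at hcon
      have hxIoo : x ∈ Set.Ioo (0:ℝ) a :=
        ⟨lt_of_le_of_ne hxmem.1 (Ne.symm hcon.1), lt_of_le_of_ne hxmem.2 hcon.2⟩
      have hgt : x / a < φ x := phi_gt_lin ha hconc hφ0 hφa hnonlin hxIoo
      have hgt2 : (a - x) / a < φ (a - x) := by
        apply phi_gt_lin ha hconc hφ0 hφa hnonlin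
        exact ⟨by linarith [hxIoo.2], by linarith [hxIoo.1]⟩
      have hxa : x / a + (a - x) / a = 1 := by field_simp; ring
      linarith
    rcases hx0a with h0 | hA
    · left
      rcases (ENNReal.toReal_eq_zero_iff _).1 h0 with hz | ht
      · exact hz
      · exact absurd ht distrib_ne_top
    · right
      rw [← ENNReal.ofReal_toReal (distrib_ne_top (a := a) (u := u) (τ := l)), ← hx, hA]
  -- Step C : the distribution is a step function
  set S : Set ℝ := {l : ℝ | 0 ≤ l ∧ distrib a u l < ENNReal.ofReal a} with hS_def
  have h2S : (2:ℝ) ∈ S := ⟨by norm_num, by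
    rw [hu2 2 le_rfl]; exact ENNReal.ofReal_pos.2 ha⟩
  have hSbdd : BddBelow S := ⟨0, fun l hl => hl.1⟩
  set l₀ := sInf S with hl0_def
  have hl₀0 : 0 ≤ l₀ := le_csInf ⟨2, h2S⟩ (fun l hl => hl.1)
  have hl₀2 : l₀ ≤ 2 := csInf_le hSbdd h2S
  have claim1 : ∀ l : ℝ, l₀ < l → distrib a u l = 0 := by
    intro l hl
    rcases le_or_gt 2 l with h2l | h2l
    · exact hu2 l h2l
    obtain ⟨l'', hl''S, hl''lt⟩ := exists_lt_of_csInf_lt ⟨2, h2S⟩ hl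
    have hmem : ∀ᵐ x ∂(volume : Measure ℝ), x ∈ Set.Ioo (0:ℝ) 2 →
        (distrib a u x = 0 ∨ distrib a u x = ENNReal.ofReal a) :=
      (ae_restrict_iff' measurableSet_Ioo).1 hDeq
    have hpos : volume (Set.Ioo l'' l) ≠ 0 := by
      rw [Real.volume_Ioo]
      exact (ENNReal.ofReal_pos.2 (by linarith)).ne'
    have hnotsub : ¬ (Set.Ioo l'' l ⊆ {x | ¬ (x ∈ Set.Ioo (0:ℝ) 2 →
        (distrib a u x = 0 ∨ distrib a u x = ENNReal.ofReal a))}) := by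
      intro hsub
      exact hpos (measure_mono_null hsub (ae_iff.1 hmem))
    obtain ⟨l', hl'mem, hl'n⟩ := Set.not_subset.1 hnotsub
    have hl'P := not_not.1 hl'n
    have hl'02 : l' ∈ Set.Ioo (0:ℝ) 2 :=
      ⟨lt_of_le_of_lt hl''S.1 hl'mem.1, lt_trans hl'mem.2 h2l⟩
    rcases hl'P hl'02 with h0 | hA
    · exact le_antisymm (le_trans (distrib_anti a u hl'mem.2.le) (le_of_eq h0)) zero_le
    · exfalso
      have hle2 : distrib a u l' ≤ distrib a u l'' := distrib_anti a u hl'mem.1.le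
      rw [hA] at hle2
      exact absurd (lt_of_le_of_lt hle2 hl''S.2) (lt_irrefl _)
  have claim2 : ∀ l : ℝ, 0 ≤ l → l < l₀ → distrib a u l = ENNReal.ofReal a := by
    intro l hl0 hll
    by_contra hne
    have : l ∈ S := ⟨hl0, lt_of_le_of_ne distrib_le hne⟩
    exact absurd (csInf_le hSbdd this) (not_le.2 hll)
  -- ‖u‖ = l₀ a.e. on [0,a]
  have hA1null : volume {s ∈ Set.Icc (0:ℝ) a | l₀ < ‖u s‖} = 0 := by
    have hcover : {s ∈ Set.Icc (0:ℝ) a | l₀ < ‖u s‖}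
        = ⋃ n : ℕ, {s ∈ Set.Icc (0:ℝ) a | l₀ + ((n:ℝ)+1)⁻¹ < ‖u s‖} := by
      ext s
      simp only [Set.mem_iUnion, Set.mem_setOf_eq]
      constructor
      · rintro ⟨hs, hlt⟩
        obtain ⟨n, hn⟩ := exists_nat_one_div_lt (sub_pos.2 hlt)
        rw [one_div] at hn
        exact ⟨n, hs, by linarith⟩
      · rintro ⟨n, hs, hlt⟩
        have : (0:ℝ) < ((n:ℝ)+1)⁻¹ := by positivity
        exact ⟨hs, by linarith⟩
    rw [hcover]
    apply measure_iUnion_null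
    intro n
    have : (0:ℝ) < ((n:ℝ)+1)⁻¹ := by positivity
    exact claim1 _ (by linarith)
  have hA2null : volume {s ∈ Set.Icc (0:ℝ) a | ‖u s‖ < l₀} = 0 := by
    have hcover : {s ∈ Set.Icc (0:ℝ) a | ‖u s‖ < l₀}
        ⊆ ⋃ n : ℕ, {s ∈ Set.Icc (0:ℝ) a | ‖u s‖ < l₀ - ((n:ℝ)+1)⁻¹} := by
      rintro s ⟨hs, hlt⟩
      simp only [Set.mem_iUnion, Set.mem_setOf_eq]
      obtain ⟨n, hn⟩ := exists_nat_one_div_lt (sub_pos.2 hlt)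
      rw [one_div] at hn
      exact ⟨n, hs, by linarith⟩
    apply measure_mono_null hcover
    apply measure_iUnion_null
    intro n
    set c : ℝ := l₀ - ((n:ℝ)+1)⁻¹ with hc_def
    rcases le_or_gt c 0 with hc0 | hc0
    · have : {s ∈ Set.Icc (0:ℝ) a | ‖u s‖ < c} = ∅ := by
        ext s
        simp only [Set.mem_setOf_eq, Set.mem_empty_iff_false, iff_false, not_and, not_lt]
        intro _
        exact le_trans hc0 (norm_nonneg _)
      rw [this, measure_empty]
    · have hcl : c < l₀ := by
        have : (0:ℝ) < ((n:ℝ)+1)⁻¹ := by positivity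
        rw [hc_def]; linarith
      have hfull : distrib a u c = ENNReal.ofReal a := claim2 c hc0.le hcl
      have hsub : {s ∈ Set.Icc (0:ℝ) a | ‖u s‖ < c}
          ⊆ Set.Icc (0:ℝ) a \ {s ∈ Set.Icc (0:ℝ) a | c < ‖u s‖} := by
        rintro s ⟨hs, hlt⟩
        exact ⟨hs, fun hmem => absurd hmem.2 (not_lt.2 hlt.le)⟩
      apply measure_mono_null hsub
      have hms : NullMeasurableSet {s : ℝ | s ∈ Set.Icc (0:ℝ) a ∧ c < ‖u s‖} volume :=
        (measurableSet_Icc.inter (measurableSet_lt measurable_const hu.norm)).nullMeasurableSet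
      rw [measure_diff (fun s hs => hs.1) hms (by rw [show volume {s | s ∈ Set.Icc (0:ℝ) a ∧ c < ‖u s‖} = distrib a u c from rfl, hfull]; exact ENNReal.ofReal_ne_top)]
      rw [show volume {s | s ∈ Set.Icc (0:ℝ) a ∧ c < ‖u s‖} = distrib a u c from rfl, hfull,
        Real.volume_Icc, sub_zero, tsub_self]
  have hconstu : ∀ᵐ s ∂(volume.restrict (Set.Icc (0:ℝ) a)), ‖u s‖ = l₀ := by
    rw [ae_restrict_iff' measurableSet_Icc, ae_iff]
    apply measure_mono_null (?_ : _ ⊆ {s ∈ Set.Icc (0:ℝ) a | l₀ < ‖u s‖}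
      ∪ {s ∈ Set.Icc (0:ℝ) a | ‖u s‖ < l₀})
    · rw [measure_union_null_iff.2 ⟨hA1null, hA2null⟩]
    · intro s hs
      simp only [Set.mem_setOf_eq] at hs
      rw [Classical.not_imp] at hs
      rcases lt_or_gt_of_ne hs.2 with h | h
      · exact Or.inr ⟨hs.1, h⟩
      · exact Or.inl ⟨hs.1, h⟩
  -- Step D : conclude
  have hnu : eLorentzNorm φ a u = ENNReal.ofReal l₀ :=
    eLorentzNorm_const ha hm hcont hφ0 hφa hu hl₀0 hconstu
  have hl₀le1 : l₀ ≤ 1 := by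
    rw [hnu] at hfg
    exact ENNReal.ofReal_le_one.1 hfg
  have hconstv : ∀ᵐ s ∂(volume.restrict (Set.Icc (0:ℝ) a)), ‖v s‖ = 2 - l₀ := by
    filter_upwards [hvnorm, hconstu] with s h1 h2
    rw [h1, h2]
  have hnv : eLorentzNorm φ a v = ENNReal.ofReal (2 - l₀) :=
    eLorentzNorm_const ha hm hcont hφ0 hφa hv (by linarith) hconstv
  have hl₀ge1 : (2:ℝ) - l₀ ≤ 1 := by
    rw [hnv] at hfg'
    exact ENNReal.ofReal_le_one.1 hfg'
  have hl₀1 : l₀ = 1 := by linarith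
  filter_upwards [hpar, hconstu] with s h1 h2
  have hus : u s = f s := by
    rw [h1, h2, hl₀1]
    simp
  have hgs : g s = u s - f s := by
    simp [hu_def]
  show g s = (0 : ℝ → ℂ) s
  rw [Pi.zero_apply, hgs, hus, sub_self]

end
end

section
/- Let a > 0 and let φ : [0,a] → ℝ be a concave, continuous, strictly increasing function with φ(0) = 0 and φ(a) = 1 which is not linear. Let ρ : [0,a] → ℝ be a measurable function with ∫₀^a ρ*(t) dφ(t) < ∞ whose support has Lebesgue measure strictly between 0 and a, i.e., 0 < m(supp ρ) < a. Then ∫₀^a ρ*(t) dφ(t) > −∫₀^a ρ*(t) dφ(a−t), where the right-hand side is the Lebesgue–Stieltjes integral of ρ* with respect to the decreasing function t ↦ φ(a−t); equivalently, ∫₀^a ρ*(t) φ′(t) dt > ∫₀^a ρ*(t) φ′(a−t) dt, where φ′ is the a.e.-defined derivative of φ. -/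
open MeasureTheory Set Filter Topology
open scoped ENNReal NNReal Classical

noncomputable section

lemma aux_chord_le {a : ℝ} (ha : 0 < a) {φ : ℝ → ℝ}
    (hconc : ConcaveOn ℝ (Set.Icc 0 a) φ)
    (hφ0 : φ 0 = 0) (hφa : φ a = 1) {t : ℝ} (ht0 : 0 ≤ t) (hta : t ≤ a) :
    t / a ≤ φ t := by
  have h := hconc.2 (Set.mem_Icc.2 ⟨le_refl 0, ha.le⟩) (Set.mem_Icc.2 ⟨ha.le, le_refl a⟩)
    (show (0:ℝ) ≤ 1 - t / a by rw [sub_nonneg]; exact (div_le_one ha).2 hta)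
    (div_nonneg ht0 ha.le) (show (1 - t / a) + t / a = 1 by ring)
  have e1 : (1 - t / a) • (0 : ℝ) + (t / a) • a = t := by
    simp only [smul_eq_mul, mul_zero, zero_add]; field_simp
  have e2 : (1 - t / a) • φ 0 + (t / a) • φ a = t / a := by
    simp [smul_eq_mul, hφ0, hφa]
  rw [e1, e2] at h
  exact h

lemma aux_chord_lt {a : ℝ} (ha : 0 < a) {φ : ℝ → ℝ}
    (hconc : ConcaveOn ℝ (Set.Icc 0 a) φ)
    (hφ0 : φ 0 = 0) (hφa : φ a = 1)
    (hnonlin : ¬ ∀ t ∈ Set.Icc (0:ℝ) a, φ t = t / a)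
    {t : ℝ} (ht0 : 0 < t) (hta : t < a) : t / a < φ t := by
  push_neg at hnonlin
  obtain ⟨u, hu, hune⟩ := hnonlin
  have hu' : u / a < φ u := lt_of_le_of_ne (aux_chord_le ha hconc hφ0 hφa hu.1 hu.2)
    (Ne.symm hune)
  rcases lt_trichotomy t u with h | h | h
  · have hu0 : 0 < u := ht0.trans h
    have key := hconc.2 (Set.mem_Icc.2 ⟨le_refl 0, ha.le⟩) hu
      (show (0:ℝ) ≤ 1 - t / u by rw [sub_nonneg]; exact (div_le_one hu0).2 h.le)
      (div_nonneg ht0.le hu0.le) (show (1 - t / u) + t / u = 1 by ring)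
    have e1 : (1 - t / u) • (0 : ℝ) + (t / u) • u = t := by
      simp only [smul_eq_mul, mul_zero, zero_add]; field_simp
    have e2 : (1 - t / u) • φ 0 + (t / u) • φ u = (t / u) * φ u := by
      simp [smul_eq_mul, hφ0]
    rw [e1, e2] at key
    have h2 : (t / u) * (u / a) < (t / u) * φ u :=
      mul_lt_mul_of_pos_left hu' (div_pos ht0 hu0)
    have h3 : t / u * (u / a) = t / a := by field_simp
    linarith
  · subst h; exact hu'
  · set l := (t - u) / (a - u) with hl
    have hau : 0 < a - u := sub_pos.2 (h.trans hta)
    have hl0 : 0 < l := div_pos (sub_pos.2 h) hau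
    have hl1 : l < 1 := (div_lt_one hau).2 (by linarith)
    have key := hconc.2 hu (Set.mem_Icc.2 ⟨ha.le, le_refl a⟩)
      (show (0:ℝ) ≤ 1 - l by linarith) hl0.le (show (1 - l) + l = 1 by ring)
    have e1 : (1 - l) • u + l • a = t := by
      simp only [smul_eq_mul, hl]; field_simp; ring
    have e2 : (1 - l) • φ u + l • φ a = (1 - l) * φ u + l := by
      simp [smul_eq_mul, hφa]
    rw [e1, e2] at key
    have h2 : (1 - l) * (u / a) < (1 - l) * φ u :=
      mul_lt_mul_of_pos_left hu' (by linarith)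
    have h3 : (1 - l) * (u / a) + l = t / a := by
      simp only [hl]; field_simp; ring
    linarith

lemma aux_stieltjes_apply {a : ℝ} {φ : ℝ → ℝ}
    (h : 0 ≤ a ∧ MonotoneOn φ (Set.Icc 0 a) ∧ ContinuousOn φ (Set.Icc 0 a)) (t : ℝ) :
    stieltjesOfOn φ a t = φ (clampIcc a t) := by
  simp only [stieltjesOfOn, dif_pos h]

lemma aux_stieltjes_continuous {a : ℝ} {φ : ℝ → ℝ}
    (h : 0 ≤ a ∧ MonotoneOn φ (Set.Icc 0 a) ∧ ContinuousOn φ (Set.Icc 0 a)) :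
    Continuous (stieltjesOfOn φ a) := by
  have he : ⇑(stieltjesOfOn φ a) = fun t => φ (clampIcc a t) := funext (aux_stieltjes_apply h)
  rw [he]
  exact h.2.2.comp_continuous (clampIcc_continuous a) (fun x => clampIcc_mem a x h.1)

lemma aux_measure_eq {a : ℝ} {φ : ℝ → ℝ}
    (h : 0 ≤ a ∧ MonotoneOn φ (Set.Icc 0 a) ∧ ContinuousOn φ (Set.Icc 0 a))
    {S : Set ℝ} {c : ℝ} (hc0 : 0 ≤ c) (hca : c ≤ a)
    (h1 : Set.Ioo 0 c ⊆ S) (h2 : S ⊆ Set.Ioc 0 c) :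
    (stieltjesOfOn φ a).measure S = ENNReal.ofReal (φ c - φ 0) := by
  set F := stieltjesOfOn φ a with hF
  have hclampc : clampIcc a c = c := by
    simp only [clampIcc, max_eq_left hc0, min_eq_left hca]
  have hclamp0 : clampIcc a 0 = 0 := by
    simp only [clampIcc, max_self, min_eq_left h.1]
  have hFc : F c = φ c := by rw [aux_stieltjes_apply h, hclampc]
  have hF0 : F 0 = φ 0 := by rw [aux_stieltjes_apply h, hclamp0]
  have hIoc : F.measure (Set.Ioc 0 c) = ENNReal.ofReal (φ c - φ 0) := by
    rw [StieltjesFunction.measure_Ioc, hFc, hF0]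
  have hsing : F.measure {c} = 0 := by
    rw [StieltjesFunction.measure_singleton]
    have hll : Function.leftLim F c = F c :=
      leftLim_eq_of_tendsto
        (((aux_stieltjes_continuous h).tendsto c).mono_left nhdsWithin_le_nhds)
    rw [hll, sub_self, ENNReal.ofReal_zero]
  refine le_antisymm ?_ ?_
  · rw [← hIoc]; exact measure_mono h2
  · rw [← hIoc]
    have hsub : Set.Ioc 0 c ⊆ S ∪ {c} := by
      intro x hx
      rcases lt_or_eq_of_le hx.2 with hxc | hxc
      · exact Or.inl (h1 ⟨hx.1, hxc⟩)
      · exact Or.inr (by simp [hxc])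
    calc F.measure (Set.Ioc 0 c) ≤ F.measure (S ∪ {c}) := measure_mono hsub
      _ ≤ F.measure S + F.measure {c} := measure_union_le _ _
      _ = F.measure S := by rw [hsing, add_zero]


/-- Let `φ` be a nonlinear, strictly increasing, concave, continuous
function on `[0,a]` with `φ 0 = 0`, `φ a = 1`, and let `ρ : [0,a] → ℝ` be measurable with
`∫₀^a ρ* dφ < ∞` and `0 < m(supp ρ) < a`.  Then
`∫₀^a ρ*(t) dφ(t) > −∫₀^a ρ*(t) dφ(a−t)`; here the right-hand side is expressed as the
Lebesgue–Stieltjes integral of `ρ*` with respect to the increasing function `t ↦ −φ(a−t)`. -/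
theorem rearr_stieltjes_reflection_inequality (a : ℝ) (ha : 0 < a) (φ : ℝ → ℝ)
    (hconc : ConcaveOn ℝ (Set.Icc 0 a) φ)
    (hcont : ContinuousOn φ (Set.Icc 0 a))
    (hmono : StrictMonoOn φ (Set.Icc 0 a))
    (hφ0 : φ 0 = 0) (hφa : φ a = 1)
    (hnonlin : ¬ ∀ t ∈ Set.Icc (0:ℝ) a, φ t = t / a)
    (ρ : ℝ → ℝ) (hρ : Measurable ρ)
    (hρmem : eLorentzNorm φ a ρ < ⊤)
    (hsupp0 : 0 < volume {t ∈ Set.Icc (0:ℝ) a | ρ t ≠ 0})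
    (hsuppa : volume {t ∈ Set.Icc (0:ℝ) a | ρ t ≠ 0} < ENNReal.ofReal a) :
    (∫⁻ t in Set.Ioc (0:ℝ) a, ENNReal.ofReal (rearr a ρ t)
        ∂(stieltjesOfOn (fun s => -φ (a - s)) a).measure)
      < ∫⁻ t in Set.Ioc (0:ℝ) a, ENNReal.ofReal (rearr a ρ t)
          ∂(stieltjesOfOn φ a).measure := by
  classical
  have hφpack : 0 ≤ a ∧ MonotoneOn φ (Set.Icc 0 a) ∧ ContinuousOn φ (Set.Icc 0 a) :=
    ⟨ha.le, hmono.monotoneOn, hcont⟩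
  set ψ : ℝ → ℝ := fun s => -φ (a - s) with hψdef
  have hmaps : ∀ x ∈ Set.Icc (0:ℝ) a, a - x ∈ Set.Icc (0:ℝ) a := by
    intro x hx
    exact ⟨by linarith [hx.2], by linarith [hx.1]⟩
  have hψpack : 0 ≤ a ∧ MonotoneOn ψ (Set.Icc 0 a) ∧ ContinuousOn ψ (Set.Icc 0 a) := by
    refine ⟨ha.le, ?_, ?_⟩
    · intro x hx y hy hxy
      simp only [hψdef, neg_le_neg_iff]
      exact hmono.monotoneOn (hmaps y hy) (hmaps x hx) (by linarith)
    · exact (hcont.comp ((continuous_const.sub continuous_id).continuousOn) hmaps).neg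
  set g : ℝ → ℝ := rearr a ρ with hgdef
  have hg_nonneg : ∀ t, 0 ≤ g t := fun t => Real.sInf_nonneg fun τ hτ => hτ.1
  -- distribution function facts
  have hdist_anti : Antitone (distrib a ρ) := by
    intro τ τ' h
    exact measure_mono fun s hs => ⟨hs.1, lt_of_le_of_lt h hs.2⟩
  have hdist_meas : ∀ b : ℝ, MeasurableSet {s ∈ Set.Icc (0:ℝ) a | b < ‖ρ s‖} := by
    intro b
    exact measurableSet_Icc.inter (measurableSet_lt measurable_const hρ.norm)
  have hdist_lt_top : ∀ τ : ℝ, distrib a ρ τ ≤ ENNReal.ofReal a := by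
    intro τ
    calc distrib a ρ τ ≤ volume (Set.Icc (0:ℝ) a) := measure_mono fun s hs => hs.1
      _ = ENNReal.ofReal a := by rw [Real.volume_Icc, sub_zero]
  have hdist0 : distrib a ρ 0 = volume {t ∈ Set.Icc (0:ℝ) a | ρ t ≠ 0} := by
    unfold distrib
    congr 1
    ext s
    simp [norm_pos_iff]
  set β : ℝ := (volume {t ∈ Set.Icc (0:ℝ) a | ρ t ≠ 0}).toReal with hβdef
  have hvolne : volume {t ∈ Set.Icc (0:ℝ) a | ρ t ≠ 0} ≠ ⊤ :=
    (hsuppa.trans ENNReal.ofReal_lt_top).ne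
  have hβpos : 0 < β := ENNReal.toReal_pos hsupp0.ne' hvolne
  have hβa : β < a := ENNReal.toReal_lt_of_lt_ofReal hsuppa
  have hdist0' : distrib a ρ 0 = ENNReal.ofReal β := by
    rw [hdist0, hβdef, ENNReal.ofReal_toReal hvolne]
  -- the distribution function tends to 0 at infinity
  have hdist_tendsto : Tendsto (fun n : ℕ => distrib a ρ n) atTop (𝓝 0) := by
    have hinter : ⋂ n : ℕ, {s ∈ Set.Icc (0:ℝ) a | (n:ℝ) < ‖ρ s‖} = ∅ := by
      ext s
      simp only [Set.mem_iInter, Set.mem_empty_iff_false, iff_false, not_forall]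
      obtain ⟨n, hn⟩ := exists_nat_gt ‖ρ s‖
      exact ⟨n, fun hc => absurd hc.2 (not_lt.2 hn.le)⟩
    have hanti : Antitone (fun n : ℕ => {s ∈ Set.Icc (0:ℝ) a | (n:ℝ) < ‖ρ s‖}) := by
      intro n m hnm s hs
      exact ⟨hs.1, lt_of_le_of_lt (by exact_mod_cast hnm) hs.2⟩
    have htend := tendsto_measure_iInter_atTop (μ := volume)
      (s := fun n : ℕ => {s ∈ Set.Icc (0:ℝ) a | (n:ℝ) < ‖ρ s‖})
      (fun n => (hdist_meas (n:ℝ)).nullMeasurableSet) hanti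
      ⟨0, (lt_of_le_of_lt (hdist_lt_top _) ENNReal.ofReal_lt_top).ne⟩
    rw [hinter, measure_empty] at htend
    exact htend
  -- the admissible set in the definition of rearr is nonempty for t > 0
  have hA : ∀ t : ℝ, 0 < t →
      {τ : ℝ | 0 ≤ τ ∧ distrib a ρ τ ≤ ENNReal.ofReal t}.Nonempty := by
    intro t ht
    obtain ⟨n, hn⟩ := (hdist_tendsto.eventually_lt_const (ENNReal.ofReal_pos.2 ht)).exists
    exact ⟨n, Nat.cast_nonneg n, hn.le⟩
  -- rearr vanishes beyond β
  have hg_zero : ∀ t : ℝ, β ≤ t → g t = 0 := by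
    intro t hβt
    have h0mem : (0:ℝ) ∈ {τ : ℝ | 0 ≤ τ ∧ distrib a ρ τ ≤ ENNReal.ofReal t} :=
      ⟨le_refl 0, by rw [hdist0']; exact ENNReal.ofReal_le_ofReal hβt⟩
    exact le_antisymm (csInf_le ⟨0, fun x hx => hx.1⟩ h0mem) (hg_nonneg t)
  -- rearr is positive at β/2
  have hghalf : 0 < g (β / 2) := by
    rcases lt_or_eq_of_le (hg_nonneg (β / 2)) with h | h
    · exact h
    exfalso
    have hAne := hA (β / 2) (half_pos hβpos)
    have hub : ∀ n : ℕ, distrib a ρ (1 / (n + 1) : ℝ) ≤ ENNReal.ofReal (β / 2) := by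
      intro n
      have hpos : (0:ℝ) < 1 / (n + 1) := by positivity
      have hlt : sInf {τ : ℝ | 0 ≤ τ ∧ distrib a ρ τ ≤ ENNReal.ofReal (β / 2)}
          < 1 / (n + 1) := by
        rw [show sInf {τ : ℝ | 0 ≤ τ ∧ distrib a ρ τ ≤ ENNReal.ofReal (β / 2)} = g (β / 2)
          from rfl, ← h]
        exact hpos
      obtain ⟨τ, hτmem, hτlt⟩ := exists_lt_of_csInf_lt hAne hlt
      exact le_trans (hdist_anti hτlt.le) hτmem.2
    have hmono_sets : Monotone (fun n : ℕ =>
        {s ∈ Set.Icc (0:ℝ) a | (1 / (n + 1) : ℝ) < ‖ρ s‖}) := by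
      intro n m hnm s hs
      refine ⟨hs.1, lt_of_le_of_lt ?_ hs.2⟩
      apply one_div_le_one_div_of_le (by positivity)
      exact_mod_cast by exact_mod_cast Nat.add_le_add_right hnm 1
    have hUnion : (⋃ n : ℕ, {s ∈ Set.Icc (0:ℝ) a | (1 / (n + 1) : ℝ) < ‖ρ s‖})
        = {s ∈ Set.Icc (0:ℝ) a | (0:ℝ) < ‖ρ s‖} := by
      ext s
      simp only [Set.mem_iUnion, Set.mem_setOf_eq]
      constructor
      · rintro ⟨n, hs1, hs2⟩
        exact ⟨hs1, lt_trans (by positivity) hs2⟩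
      · rintro ⟨hs1, hs2⟩
        obtain ⟨n, hn⟩ := exists_nat_one_div_lt hs2
        exact ⟨n, hs1, hn⟩
    have htend := tendsto_measure_iUnion_atTop (μ := volume) hmono_sets
    rw [hUnion] at htend
    have hfinal : distrib a ρ 0 ≤ ENNReal.ofReal (β / 2) :=
      le_of_tendsto htend (Filter.Eventually.of_forall hub)
    rw [hdist0'] at hfinal
    have : β ≤ β / 2 := (ENNReal.ofReal_le_ofReal_iff (by positivity)).1 hfinal
    linarith
  -- rearr is antitone on (0, ∞)
  have hg_anti : AntitoneOn g (Set.Ioi (0:ℝ)) := by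
    intro s hs t ht hst
    refine csInf_le_csInf ⟨0, fun x hx => hx.1⟩ (hA s hs) ?_
    intro τ hτ
    exact ⟨hτ.1, hτ.2.trans (ENNReal.ofReal_le_ofReal hst)⟩
  -- superlevel sets
  set T : ℝ → Set ℝ := fun s => insert 0 {t ∈ Set.Ioc (0:ℝ) a | s < g t} with hTdef
  have hTne : ∀ s, (T s).Nonempty := fun s => ⟨0, Set.mem_insert _ _⟩
  have hTbdd : ∀ s, BddAbove (T s) := by
    intro s
    refine ⟨a, ?_⟩
    rintro t ht
    rcases Set.mem_insert_iff.1 ht with rfl | ⟨ht', _⟩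
    · exact ha.le
    · exact ht'.2
  set c : ℝ → ℝ := fun s => sSup (T s) with hcdef
  have hc0 : ∀ s, 0 ≤ c s := fun s => le_csSup (hTbdd s) (Set.mem_insert _ _)
  have hca : ∀ s, c s ≤ a := by
    intro s
    refine csSup_le (hTne s) ?_
    rintro t ht
    rcases Set.mem_insert_iff.1 ht with rfl | ⟨ht', _⟩
    · exact ha.le
    · exact ht'.2
  set S : ℝ → Set ℝ := fun s => {t : ℝ | s < g t} ∩ Set.Ioc 0 a with hSdef
  have hS_sub : ∀ s, S s ⊆ Set.Ioc 0 (c s) := by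
    intro s t ht
    exact ⟨ht.2.1, le_csSup (hTbdd s) (Set.mem_insert_iff.2 (Or.inr ⟨ht.2, ht.1⟩))⟩
  have hS_sup : ∀ s, Set.Ioo 0 (c s) ⊆ S s := by
    intro s t ht
    obtain ⟨u, hu, htu⟩ := exists_lt_of_lt_csSup (hTne s) ht.2
    rcases Set.mem_insert_iff.1 hu with rfl | ⟨hu', hsu⟩
    · exact absurd htu (not_lt.2 ht.1.le)
    · exact ⟨lt_of_lt_of_le hsu
        (hg_anti (Set.mem_Ioi.2 ht.1) (Set.mem_Ioi.2 hu'.1) htu.le),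
        ht.1, htu.le.trans hu'.2⟩
  -- measures of superlevel sets
  have hMφ : ∀ s, (stieltjesOfOn φ a).measure (S s) = ENNReal.ofReal (φ (c s)) := by
    intro s
    rw [aux_measure_eq hφpack (hc0 s) (hca s) (hS_sup s) (hS_sub s), hφ0, sub_zero]
  have hMψ : ∀ s, (stieltjesOfOn ψ a).measure (S s)
      = ENNReal.ofReal (φ a - φ (a - c s)) := by
    intro s
    rw [aux_measure_eq hψpack (hc0 s) (hca s) (hS_sup s) (hS_sub s)]
    congr 1
    simp only [hψdef, sub_zero]
    ring
  -- pointwise comparison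
  have hle : ∀ s, (stieltjesOfOn ψ a).measure (S s)
      ≤ (stieltjesOfOn φ a).measure (S s) := by
    intro s
    rw [hMφ s, hMψ s]
    apply ENNReal.ofReal_le_ofReal
    have h1 := aux_chord_le ha hconc hφ0 hφa (hc0 s) (hca s)
    have h2 := aux_chord_le ha hconc hφ0 hφa
      (by linarith [hca s] : (0:ℝ) ≤ a - c s) (by linarith [hc0 s])
    have h3 : c s / a + (a - c s) / a = 1 := by field_simp; ring
    rw [hφa]
    linarith
  -- strict pointwise comparison on (0, g(β/2))
  have hstrict : ∀ s ∈ Set.Ioo (0:ℝ) (g (β / 2)),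
      (stieltjesOfOn ψ a).measure (S s) < (stieltjesOfOn φ a).measure (S s) := by
    intro s hs
    have hchalf : β / 2 ∈ T s :=
      Set.mem_insert_iff.2 (Or.inr ⟨⟨half_pos hβpos, by linarith⟩, hs.2⟩)
    have hcpos : 0 < c s := lt_of_lt_of_le (half_pos hβpos) (le_csSup (hTbdd s) hchalf)
    have hcleβ : c s ≤ β := by
      refine csSup_le (hTne s) ?_
      rintro t ht
      rcases Set.mem_insert_iff.1 ht with rfl | ⟨ht', hst⟩
      · exact hβpos.le
      · by_contra hc
        push_neg at hc
        rw [hg_zero t hc.le] at hst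
        exact absurd hst (not_lt.2 hs.1.le)
    have hclta : c s < a := lt_of_le_of_lt hcleβ hβa
    have hφcpos : 0 < φ (c s) := by
      have := hmono (Set.mem_Icc.2 ⟨le_refl 0, ha.le⟩)
        (Set.mem_Icc.2 ⟨hcpos.le, hclta.le⟩) hcpos
      rwa [hφ0] at this
    rw [hMφ s, hMψ s, ENNReal.ofReal_lt_ofReal_iff hφcpos]
    have h1 := aux_chord_lt ha hconc hφ0 hφa hnonlin hcpos hclta
    have h2 := aux_chord_le ha hconc hφ0 hφa
      (by linarith : (0:ℝ) ≤ a - c s) (by linarith [hc0 s])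
    have h3 : c s / a + (a - c s) / a = 1 := by field_simp; ring
    rw [hφa]
    linarith
  -- layer cake representation
  have hg_meas : ∀ (μ : Measure ℝ), AEMeasurable g (μ.restrict (Set.Ioc 0 a)) := fun μ =>
    aemeasurable_restrict_of_antitoneOn measurableSet_Ioc
      (hg_anti.mono Set.Ioc_subset_Ioi_self)
  have key : ∀ (F : StieltjesFunction ℝ),
      (∫⁻ t in Set.Ioc (0:ℝ) a, ENNReal.ofReal (g t) ∂F.measure)
        = ∫⁻ s in Set.Ioi (0:ℝ), F.measure (S s) := by
    intro F
    rw [lintegral_eq_lintegral_meas_lt _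
      (Filter.Eventually.of_forall hg_nonneg) (hg_meas _)]
    apply lintegral_congr
    intro s
    rw [Measure.restrict_apply' measurableSet_Ioc]
  rw [key (stieltjesOfOn ψ a), key (stieltjesOfOn φ a)]
  have hSanti : Antitone fun s => (stieltjesOfOn φ a).measure (S s) := by
    intro s s' hss'
    exact measure_mono fun t ht => ⟨lt_of_le_of_lt hss' ht.1, ht.2⟩
  have hfin : (∫⁻ s in Set.Ioi (0:ℝ), (stieltjesOfOn ψ a).measure (S s)) ≠ ⊤ := by
    refine ne_of_lt (lt_of_le_of_lt (lintegral_mono fun s => hle s) ?_)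
    rw [← key (stieltjesOfOn φ a)]
    exact hρmem
  refine lintegral_strict_mono_of_ae_le_of_ae_lt_on
    (hSanti.measurable.aemeasurable) hfin (Filter.Eventually.of_forall hle)
    (s := Set.Ioo 0 (g (β / 2))) ?_ (Filter.Eventually.of_forall hstrict)
  have hIoo : Set.Ioo (0:ℝ) (g (β / 2)) ∩ Set.Ioi 0 = Set.Ioo 0 (g (β / 2)) :=
    Set.inter_eq_left.2 (fun x hx => hx.1)
  rw [Measure.restrict_apply' measurableSet_Ioi, hIoo, Real.volume_Ioo]
  exact (ENNReal.ofReal_pos.2 (by simpa using hghalf)).ne'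

end
end
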